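/- The mutual exclusion implementation L(M) (Algorithm 1), built from any strictly serializable strongly progressive TM implementation M, satisfies the mutual-exclusion property: after any execution of L(M), at most one process is in the critical section. -/

import Mathlib

/-!
A formal model of the mutual exclusion implementation `L(M)` (Algorithm 1 of
Kuznetsov & Ravi, "Progressive Transactional Memory in Time and Space"), built
from a strictly serializable, strongly progressive TM implementation `M` that
accesses the single t-object `X`.

Since `M` is strictly serializable and strongly progressive and every
transaction of `L(M)` accesses only the single t-object `X`, each committed
transaction of `M` takes effect as one atomic step that reads the previous
value of `X` and writes the identity `[p_i, face_i]` to `X`, whereas an aborted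
transaction has no effect (the process retries the while loop).  The model
below represents this: the step `transSuccess` is a committed transaction of
the TM `M` (returning the previous value of `X`) and `transAbort` is an aborted
one.  Everything else of Algorithm 1 (the registers `Done`, `Succ`, `Lock` and
the control flow of the `Entry` and `Exit` operations) is modelled faithfully,
one line per step.

A process is *in the critical section* when its Enter operation has returned
`ok` and it has not yet invoked Exit, i.e., its program counter is `crit`.
-/

/-- Program locations of a process executing Algorithm 1. -/
inductive Loc : Type where
  | idle        -- outside Entry/Exit (remainder section)
  | entry1      -- about to write Done[p, face] := false
  | entry2      -- about to write Succ[p, face] := ⊥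
  | trans       -- in the while loop executing the transaction func() on M
  | lockPred    -- about to write Lock[p][prev.pid] := locked
  | setSucc     -- about to write Succ[prev] := p
  | checkDone   -- about to read Done[prev]
  | spin        -- spinning on Lock[p][prev.pid]
  | crit        -- in the critical section (Enter returned ok)
  | exit1       -- Exit invoked; about to write Done[p, face] := true
  | exit2       -- about to write Lock[Succ[p, face]][p] := unlocked
deriving DecidableEq

/-- A configuration of `L(M)` for `n` processes: the control state and local
variables of each process, and the values of the shared objects (`X`, `Done`,
`Succ`, `Lock`).  `lock p q = true` means the register `Lock[p][q]` is
`locked`. -/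
structure Conf (n : ℕ) where
  pc : Fin n → Loc
  face : Fin n → Bool
  prev : Fin n → Option (Fin n × Bool)
  X : Option (Fin n × Bool)
  done : Fin n → Bool → Bool
  succ : Fin n → Bool → Option (Fin n)
  lock : Fin n → Fin n → Bool

/-- The initial configuration. -/
def initConf (n : ℕ) : Conf n :=
  { pc := fun _ => Loc.idle
    face := fun _ => false
    prev := fun _ => none
    X := none
    done := fun _ _ => false
    succ := fun _ _ => none
    lock := fun _ _ => false }

/-- One step of process `p` in `L(M)`. -/
inductive MStep (n : ℕ) : Fin n → Conf n → Conf n → Prop where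
  /-- `p` invokes Enter: it adopts a new identity `face_p := 1 − face_p`. -/
  | invokeEnter (c : Conf n) (p : Fin n) :
      c.pc p = Loc.idle →
      MStep n p c { c with pc := Function.update c.pc p Loc.entry1,
                           face := Function.update c.face p (!c.face p) }
  /-- no-op step of an idle process (remainder section). -/
  | idleSkip (c : Conf n) (p : Fin n) :
      c.pc p = Loc.idle → MStep n p c c
  /-- Entry line 2: `Done[p, face_p].write(false)`. -/
  | doneWrite (c : Conf n) (p : Fin n) :
      c.pc p = Loc.entry1 →
      MStep n p c { c with pc := Function.update c.pc p Loc.entry2,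
                           done := Function.update c.done p
                             (Function.update (c.done p) (c.face p) false) }
  /-- Entry line 3: `Succ[p, face_p].write(⊥)`. -/
  | succInit (c : Conf n) (p : Fin n) :
      c.pc p = Loc.entry2 →
      MStep n p c { c with pc := Function.update c.pc p Loc.trans,
                           succ := Function.update c.succ p
                             (Function.update (c.succ p) (c.face p) none) }
  /-- The transaction `func()` on `M` aborts (returns `false`); `p` retries. -/
  | transAbort (c : Conf n) (p : Fin n) :
      c.pc p = Loc.trans → MStep n p c c
  /-- The transaction `func()` on `M` commits: atomically `prev_p := X;
  X := [p, face_p]`.  If `prev_p = ⊥`, `p` enters the critical section. -/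
  | transSuccess (c : Conf n) (p : Fin n) :
      c.pc p = Loc.trans →
      MStep n p c { c with
        pc := Function.update c.pc p (if c.X = none then Loc.crit else Loc.lockPred),
        prev := Function.update c.prev p c.X,
        X := some (p, c.face p) }
  /-- `Lock[p][prev.pid].write(locked)`. -/
  | lockWrite (c : Conf n) (p q : Fin n) (f : Bool) :
      c.pc p = Loc.lockPred → c.prev p = some (q, f) →
      MStep n p c { c with pc := Function.update c.pc p Loc.setSucc,
                           lock := Function.update c.lock p
                             (Function.update (c.lock p) q true) }
  /-- `Succ[prev].write(p)`. -/
  | succWrite (c : Conf n) (p q : Fin n) (f : Bool) :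
      c.pc p = Loc.setSucc → c.prev p = some (q, f) →
      MStep n p c { c with pc := Function.update c.pc p Loc.checkDone,
                           succ := Function.update c.succ q
                             (Function.update (c.succ q) f (some p)) }
  /-- read `Done[prev] = true`: `p` enters the critical section. -/
  | doneCheckTrue (c : Conf n) (p q : Fin n) (f : Bool) :
      c.pc p = Loc.checkDone → c.prev p = some (q, f) → c.done q f = true →
      MStep n p c { c with pc := Function.update c.pc p Loc.crit }
  /-- read `Done[prev] = false`: `p` spins on `Lock[p][prev.pid]`. -/
  | doneCheckFalse (c : Conf n) (p q : Fin n) (f : Bool) :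
      c.pc p = Loc.checkDone → c.prev p = some (q, f) → c.done q f = false →
      MStep n p c { c with pc := Function.update c.pc p Loc.spin }
  /-- spin: `Lock[p][prev.pid]` is still `locked`. -/
  | spinLocked (c : Conf n) (p q : Fin n) (f : Bool) :
      c.pc p = Loc.spin → c.prev p = some (q, f) → c.lock p q = true →
      MStep n p c c
  /-- spin: `Lock[p][prev.pid]` is `unlocked`; `p` enters the critical section. -/
  | spinUnlocked (c : Conf n) (p q : Fin n) (f : Bool) :
      c.pc p = Loc.spin → c.prev p = some (q, f) → c.lock p q = false →
      MStep n p c { c with pc := Function.update c.pc p Loc.crit }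
  /-- no-op step of a process inside the critical section. -/
  | critSkip (c : Conf n) (p : Fin n) :
      c.pc p = Loc.crit → MStep n p c c
  /-- `p` invokes Exit. -/
  | invokeExit (c : Conf n) (p : Fin n) :
      c.pc p = Loc.crit →
      MStep n p c { c with pc := Function.update c.pc p Loc.exit1 }
  /-- Exit line 1: `Done[p, face_p].write(true)`. -/
  | exitDone (c : Conf n) (p : Fin n) :
      c.pc p = Loc.exit1 →
      MStep n p c { c with pc := Function.update c.pc p Loc.exit2,
                           done := Function.update c.done p
                             (Function.update (c.done p) (c.face p) true) }
  /-- Exit line 2: `Lock[Succ[p, face_p]][p].write(unlocked)`; Exit returns. -/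
  | exitUnlockSome (c : Conf n) (p q : Fin n) :
      c.pc p = Loc.exit2 → c.succ p (c.face p) = some q →
      MStep n p c { c with pc := Function.update c.pc p Loc.idle,
                           lock := Function.update c.lock q
                             (Function.update (c.lock q) p false) }
  /-- Exit line 2 with no registered successor; Exit returns. -/
  | exitUnlockNone (c : Conf n) (p : Fin n) :
      c.pc p = Loc.exit2 → c.succ p (c.face p) = none →
      MStep n p c { c with pc := Function.update c.pc p Loc.idle }

/-- Configurations reachable in some execution of `L(M)`. -/
def Reachable (n : ℕ) (c : Conf n) : Prop :=
  Relation.ReflTransGen (fun a b => ∃ p, MStep n p a b) (initConf n) c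

/-- Process `p` is in the critical section: its Enter has returned `ok` and it
has not invoked Exit. -/
def inCS {n : ℕ} (c : Conf n) (p : Fin n) : Prop := c.pc p = Loc.crit

/-- An infinite execution of `L(M)`: at time `i` the scheduled process
`sched i` takes one step. -/
structure MRun (n : ℕ) where
  conf : ℕ → Conf n
  sched : ℕ → Fin n
  start : conf 0 = initConf n
  steps : ∀ i, MStep n (sched i) (conf i) (conf (i + 1))

/-- Every process takes infinitely many steps in `R`. -/
def fairRun {n : ℕ} (R : MRun n) : Prop :=
  ∀ p : Fin n, ∀ i, ∃ j, i ≤ j ∧ R.sched j = p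

/-- Process `p` invokes Enter at time `i` of the run `R`. -/
def enterInvokedAt {n : ℕ} (R : MRun n) (i : ℕ) (p : Fin n) : Prop :=
  R.sched i = p ∧ (R.conf i).pc p = Loc.idle ∧ (R.conf (i + 1)).pc p = Loc.entry1

/-- At time `i` the transaction `func()` of the scheduled process commits
(returns the previous value of `X` rather than aborting), terminating its
while loop. -/
def transSuccessAt {n : ℕ} (R : MRun n) (i : ℕ) : Prop :=
  (R.conf i).pc (R.sched i) = Loc.trans ∧
  (R.conf (i + 1)).pc (R.sched i) ≠ Loc.trans

/-- Formal counterpart, at the level of `L(M)`, of the hypothesis that the TM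
`M` is strongly progressive: whenever some process is executing the transaction
`func()` on the single t-object `X`, not all the concurrent transactions abort,
i.e., some process's transaction eventually commits. -/
def stronglyProgressiveRun {n : ℕ} (R : MRun n) : Prop :=
  ∀ i, (∃ p, (R.conf i).pc p = Loc.trans) → ∃ j, i ≤ j ∧ transSuccessAt R j

/-! ### Auxiliary development for the mutual-exclusion proof -/

section MutexProof

variable {n : ℕ}

/-- locations of processes that are "active": committed their transaction and
not yet finished the `Done` write of Exit. -/
def actB : Loc → Bool
  | .lockPred => true | .setSucc => true | .checkDone => true
  | .spin => true | .crit => true | .exit1 => true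
  | _ => false

/-- waiting locations (inside Entry after the transaction committed). -/
def wtB : Loc → Bool
  | .lockPred => true | .setSucc => true | .checkDone => true | .spin => true
  | _ => false

/-- waiting locations after the `Lock` write. -/
def waitB : Loc → Bool
  | .setSucc => true | .checkDone => true | .spin => true
  | _ => false

/-- locations inside Entry before the transaction commits. -/
def entB : Loc → Bool
  | .entry1 => true | .entry2 => true | .trans => true
  | _ => false

/-- locations of a "live" session: from commit to the final unlock step. -/
def liveB (l : Loc) : Bool := actB l || (l == Loc.exit2)

/-- The state of the owner `q` of a "dead" node `(q, f)` that may still be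
referenced (by `X` or by the `prev` field of the head of the queue). -/
def Ok (c : Conf n) (q : Fin n) (f : Bool) : Prop :=
  (c.face q = f ∧ (c.pc q = Loc.idle ∨ c.pc q = Loc.exit2)) ∨
  (c.face q ≠ f ∧ (entB (c.pc q) = true ∨ wtB (c.pc q) = true))

/-- The inductive invariant: `L` is the queue of active processes, in commit
order (oldest first). -/
structure InvL (c : Conf n) (L : List (Fin n)) : Prop where
  nodup : L.Nodup
  mem : ∀ p, p ∈ L ↔ actB (c.pc p) = true
  tailW : ∀ p ∈ L.tail, wtB (c.pc p) = true
  chain : L.Chain' (fun q p => c.prev p = some (q, c.face q))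
  xlast : ∀ p ∈ L.getLast?, c.X = some (p, c.face p)
  xempty : L = [] → c.X = none ∨
      ∃ q f, c.X = some (q, f) ∧ c.done q f = true ∧ Ok c q f
  headOk : ∀ p l, L = p :: l → c.prev p = none ∨
      ∃ q f, c.prev p = some (q, f) ∧ c.done q f = true ∧
        ((q = p ∧ c.face p ≠ f) ∨ (q ≠ p ∧ Ok c q f))
  doneF : ∀ q, c.pc q ≠ Loc.idle → c.pc q ≠ Loc.entry1 → c.pc q ≠ Loc.exit2 →
      c.done q (c.face q) = false
  doneE : ∀ q, c.pc q = Loc.exit2 → c.done q (c.face q) = true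
  lockI : ∀ p q f, waitB (c.pc p) = true → c.prev p = some (q, f) →
      c.face q = f → liveB (c.pc q) = true → c.lock p q = true

lemma actB_ne_idle {l : Loc} (h : actB l = true) : l ≠ Loc.idle := by
  cases l <;> simp_all [actB]

lemma actB_ne_entry1 {l : Loc} (h : actB l = true) : l ≠ Loc.entry1 := by
  cases l <;> simp_all [actB]

lemma actB_ne_exit2 {l : Loc} (h : actB l = true) : l ≠ Loc.exit2 := by
  cases l <;> simp_all [actB]

lemma actB_live {l : Loc} (h : actB l = true) : liveB l = true := by
  simp [liveB, h]

/-- every element of the tail of a `Chain'` has a predecessor in the list. -/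
lemma chain'_pred {α : Type*} {R : α → α → Prop} :
    ∀ {L : List α}, L.Chain' R → ∀ r ∈ L.tail, ∃ s ∈ L, R s r := by
  intro L
  induction L with
  | nil => intro _ r hr; simp at hr
  | cons a l ih =>
    intro h r hr
    simp only [List.tail_cons] at hr
    cases l with
    | nil => simp at hr
    | cons b l' =>
      rw [List.Chain', List.isChain_cons_cons] at h
      rcases List.mem_cons.mp hr with hrb | hrl
      · exact ⟨a, by simp, hrb ▸ h.1⟩
      · obtain ⟨s, hs, hR⟩ := ih h.2 r hrl
        exact ⟨s, List.mem_cons_of_mem _ hs, hR⟩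

lemma chain'_mono_mem {α : Type*} {R S : α → α → Prop} :
    ∀ {l : List α}, (∀ a ∈ l, ∀ b ∈ l, R a b → S a b) → l.Chain' R → l.Chain' S := by
  intro l
  induction l with
  | nil => intro _ _; exact List.isChain_nil
  | cons a t ih =>
    intro hmono h
    cases t with
    | nil => exact List.isChain_singleton _
    | cons b t' =>
      unfold List.Chain' at h ⊢
      rw [List.isChain_cons_cons] at h ⊢
      refine ⟨hmono a (by simp) b (by simp) h.1, ih ?_ h.2⟩
      intro x hx y hy
      exact hmono x (List.mem_cons_of_mem _ hx) y (List.mem_cons_of_mem _ hy)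

lemma mem_of_mem_getLast?' {α : Type*} {l : List α} {a : α}
    (h : a ∈ l.getLast?) : a ∈ l := by
  obtain ⟨hne, rfl⟩ := List.mem_getLast?_eq_getLast h
  exact List.getLast_mem hne

/-- a member of `L` that is not in the tail is the head. -/
lemma head_of_mem_not_tail {L : List (Fin n)} {p : Fin n}
    (hp : p ∈ L) (hnt : p ∉ L.tail) : L = p :: L.tail := by
  cases L with
  | nil => simp at hp
  | cons a t =>
    rcases List.mem_cons.mp hp with h | h
    · simp [h]
    · exact absurd h hnt

/-- an active process that is not in a waiting location is the head of `L`. -/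
lemma head_of_act_not_wt {c : Conf n} {L : List (Fin n)} (h : InvL c L)
    {p : Fin n} (hact : actB (c.pc p) = true) (hw : wtB (c.pc p) ≠ true) :
    L = p :: L.tail :=
  head_of_mem_not_tail ((h.mem p).mpr hact) (fun ht => hw (h.tailW p ht))

/-- for a tail element the `prev` field points to its (live) predecessor. -/
lemma tail_prev {c : Conf n} {L : List (Fin n)} (h : InvL c L)
    {p : Fin n} (hp : p ∈ L.tail) :
    ∃ q ∈ L, c.prev p = some (q, c.face q) :=
  chain'_pred h.chain p hp

end MutexProof
section MutexProof2
variable {n : ℕ}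

/-- `Ok` is preserved when `p` invokes Enter. -/
lemma Ok_invokeEnter {c : Conf n} {p q : Fin n} {f : Bool}
    (hpc : c.pc p = Loc.idle) (hOk : Ok c q f) :
    Ok { c with pc := Function.update c.pc p Loc.entry1,
                face := Function.update c.face p (!c.face p) } q f := by
  by_cases hq : q = p
  · subst hq
    rcases hOk with ⟨hf, _⟩ | ⟨_, hl⟩
    · right
      refine ⟨?_, ?_⟩
      · show Function.update c.face q (!c.face q) q ≠ f
        rw [Function.update_self, hf]
        simp
      · left
        show entB (Function.update c.pc q Loc.entry1 q) = true
        rw [Function.update_self]; rfl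
    · rw [hpc] at hl; simp [entB, wtB] at hl
  · unfold Ok at hOk ⊢
    simpa [Function.update_of_ne hq] using hOk

lemma inv_invokeEnter {c : Conf n} {L : List (Fin n)} (h : InvL c L) {p : Fin n}
    (hpc : c.pc p = Loc.idle) :
    InvL { c with pc := Function.update c.pc p Loc.entry1,
                  face := Function.update c.face p (!c.face p) } L := by
  have hpL : p ∉ L := fun hm => by
    have := (h.mem p).mp hm; rw [hpc] at this; simp [actB] at this
  have hne : ∀ r ∈ L, r ≠ p := fun r hr e => hpL (e ▸ hr)
  refine ⟨h.nodup, ?_, ?_, ?_, ?_, ?_, ?_, ?_, ?_, ?_⟩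
  · intro r
    by_cases hr : r = p
    · subst hr
      simp only [Function.update_self]
      simp [actB, hpL]
    · simp only [Function.update_of_ne hr]
      exact h.mem r
  · intro r hr
    dsimp only
    rw [Function.update_of_ne (hne r (List.mem_of_mem_tail hr))]
    exact h.tailW r hr
  · refine chain'_mono_mem ?_ h.chain
    intro a ha b hb hR
    show c.prev b = some (a, Function.update c.face p (!c.face p) a)
    rw [Function.update_of_ne (hne a ha)]
    exact hR
  · intro r hr
    have hrL : r ∈ L := mem_of_mem_getLast?' hr
    show c.X = some (r, Function.update c.face p (!c.face p) r)
    rw [Function.update_of_ne (hne r hrL)]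
    exact h.xlast r hr
  · intro hL
    rcases h.xempty hL with hX | ⟨q, f, hX, hd, hOk⟩
    · exact Or.inl hX
    · exact Or.inr ⟨q, f, hX, hd, Ok_invokeEnter hpc hOk⟩
  · intro r l hLr
    have hrp : r ≠ p := hne r (hLr ▸ List.mem_cons_self)
    rcases h.headOk r l hLr with hnone | ⟨q, f, hprev, hd, hcase⟩
    · exact Or.inl hnone
    · refine Or.inr ⟨q, f, hprev, hd, ?_⟩
      rcases hcase with ⟨hqr, hf⟩ | ⟨hqr, hOk⟩
      · left
        refine ⟨hqr, ?_⟩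
        show Function.update c.face p (!c.face p) r ≠ f
        rw [Function.update_of_ne hrp]; exact hf
      · exact Or.inr ⟨hqr, Ok_invokeEnter hpc hOk⟩
  · intro r h1 h2 h3
    dsimp only at h1 h2 h3 ⊢
    by_cases hr : r = p
    · subst hr; rw [Function.update_self] at h2; exact absurd rfl h2
    · rw [Function.update_of_ne hr]
      rw [Function.update_of_ne hr] at h1 h2 h3
      exact h.doneF r h1 h2 h3
  · intro r hr
    dsimp only at hr ⊢
    by_cases hrp : r = p
    · subst hrp; rw [Function.update_self] at hr; exact absurd hr (by simp)
    · rw [Function.update_of_ne hrp] at hr ⊢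
      exact h.doneE r hr
  · intro r s f hw hprev hface hlive
    dsimp only at hw hprev hface hlive ⊢
    by_cases hr : r = p
    · subst hr; rw [Function.update_self] at hw; simp [waitB] at hw
    · by_cases hs : s = p
      · subst hs; rw [Function.update_self] at hlive; simp [liveB, actB] at hlive
      · rw [Function.update_of_ne hr] at hw
        rw [Function.update_of_ne hs] at hface hlive
        exact h.lockI r s f hw hprev hface hlive

end MutexProof2
section MutexProof3
variable {n : ℕ}

lemma Ok_pc_update {c : Conf n} {p : Fin n} {l : Loc} {s'}
    (hwt : wtB l = wtB (c.pc p)) (hent : entB l = entB (c.pc p))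
    (hidle : (l = Loc.idle) ↔ (c.pc p = Loc.idle))
    (he2 : (l = Loc.exit2) ↔ (c.pc p = Loc.exit2))
    {q : Fin n} {f : Bool} (hOk : Ok c q f) :
    Ok { c with pc := Function.update c.pc p l, succ := s' } q f := by
  unfold Ok at hOk ⊢
  dsimp only
  by_cases hq : q = p
  · subst hq
    rw [Function.update_self]
    rcases hOk with ⟨hf, hl⟩ | ⟨hf, hl⟩
    · refine Or.inl ⟨hf, ?_⟩
      rcases hl with hl | hl
      · exact Or.inl (hidle.mpr hl)
      · exact Or.inr (he2.mpr hl)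
    · refine Or.inr ⟨hf, ?_⟩
      rcases hl with hl | hl
      · exact Or.inl (hent ▸ hl)
      · exact Or.inr (hwt ▸ hl)
  · rw [Function.update_of_ne hq]
    exact hOk

/-- generic preservation lemma: a step of `p` that only changes `p`'s program
counter (within the same "class" of locations) and the `succ` registers. -/
lemma inv_pc_update {c : Conf n} {L : List (Fin n)} (h : InvL c L)
    {p : Fin n} {l : Loc} {s'}
    (hact : actB l = actB (c.pc p)) (hwt : wtB l = wtB (c.pc p))
    (hwait : waitB l = waitB (c.pc p)) (hent : entB l = entB (c.pc p))
    (hidle : (l = Loc.idle) ↔ (c.pc p = Loc.idle))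
    (he1 : (l = Loc.entry1) ↔ (c.pc p = Loc.entry1))
    (he2 : (l = Loc.exit2) ↔ (c.pc p = Loc.exit2)) :
    InvL { c with pc := Function.update c.pc p l, succ := s' } L := by
  have hlive : liveB l = liveB (c.pc p) := by
    unfold liveB
    rw [hact]
    congr 1
    by_cases hl2 : l = Loc.exit2
    · simp [hl2, (he2.mp hl2).symm]
    · have : c.pc p ≠ Loc.exit2 := fun e => hl2 (he2.mpr e)
      simp [hl2, this]
  refine ⟨h.nodup, ?_, ?_, ?_, ?_, ?_, ?_, ?_, ?_, ?_⟩
  · intro r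
    dsimp only
    by_cases hr : r = p
    · subst hr; rw [Function.update_self, hact]; exact h.mem r
    · rw [Function.update_of_ne hr]; exact h.mem r
  · intro r hr
    dsimp only
    by_cases hrp : r = p
    · subst hrp; rw [Function.update_self, hwt]; exact h.tailW r hr
    · rw [Function.update_of_ne hrp]; exact h.tailW r hr
  · exact h.chain
  · intro r hr; exact h.xlast r hr
  · intro hL
    rcases h.xempty hL with hX | ⟨q, f, hX, hd, hOk⟩
    · exact Or.inl hX
    · exact Or.inr ⟨q, f, hX, hd, Ok_pc_update hwt hent hidle he2 hOk⟩
  · intro r t hLr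
    rcases h.headOk r t hLr with hnone | ⟨q, f, hprev, hd, hcase⟩
    · exact Or.inl hnone
    · refine Or.inr ⟨q, f, hprev, hd, ?_⟩
      rcases hcase with ⟨hqr, hf⟩ | ⟨hqr, hOk⟩
      · exact Or.inl ⟨hqr, hf⟩
      · exact Or.inr ⟨hqr, Ok_pc_update hwt hent hidle he2 hOk⟩
  · intro r h1 h2 h3
    dsimp only at h1 h2 h3 ⊢
    by_cases hr : r = p
    · subst hr
      rw [Function.update_self] at h1 h2 h3
      exact h.doneF r (fun e => h1 (hidle.mpr e)) (fun e => h2 (he1.mpr e))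
        (fun e => h3 (he2.mpr e))
    · rw [Function.update_of_ne hr] at h1 h2 h3
      exact h.doneF r h1 h2 h3
  · intro r hr
    dsimp only at hr ⊢
    by_cases hrp : r = p
    · subst hrp
      rw [Function.update_self] at hr
      exact h.doneE r (he2.mp hr)
    · rw [Function.update_of_ne hrp] at hr
      exact h.doneE r hr
  · intro r s f hw hprev hface hlive'
    dsimp only at hw hprev hface hlive' ⊢
    by_cases hr : r = p
    · rw [hr, Function.update_self, hwait, ← hr] at hw
      by_cases hs : s = p
      · rw [hs, Function.update_self, hlive, ← hs] at hlive'
        exact h.lockI r s f hw hprev hface hlive'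
      · rw [Function.update_of_ne hs] at hlive'
        exact h.lockI r s f hw hprev hface hlive'
    · rw [Function.update_of_ne hr] at hw
      by_cases hs : s = p
      · rw [hs, Function.update_self, hlive, ← hs] at hlive'
        exact h.lockI r s f hw hprev hface hlive'
      · rw [Function.update_of_ne hs] at hlive'
        exact h.lockI r s f hw hprev hface hlive'

end MutexProof3
section MutexProof4
variable {n : ℕ}

lemma wtB_act {l : Loc} (h : wtB l = true) : actB l = true := by
  cases l <;> simp_all [wtB, actB]

lemma waitB_act {l : Loc} (h : waitB l = true) : actB l = true := by
  cases l <;> simp_all [waitB, actB]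

lemma waitB_wt {l : Loc} (h : waitB l = true) : wtB l = true := by
  cases l <;> simp_all [waitB, wtB]

lemma inv_doneWrite {c : Conf n} {L : List (Fin n)} (h : InvL c L) {p : Fin n}
    (hpc : c.pc p = Loc.entry1) :
    InvL { c with pc := Function.update c.pc p Loc.entry2,
                  done := Function.update c.done p
                    (Function.update (c.done p) (c.face p) false) } L := by
  have hpL : p ∉ L := fun hm => by
    have := (h.mem p).mp hm; rw [hpc] at this; simp [actB] at this
  have hne : ∀ r ∈ L, r ≠ p := fun r hr e => hpL (e ▸ hr)
  have hOk' : ∀ q f, Ok c q f → c.done q f = true →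
      Ok { c with pc := Function.update c.pc p Loc.entry2,
                  done := Function.update c.done p
                    (Function.update (c.done p) (c.face p) false) } q f ∧
      Function.update c.done p
        (Function.update (c.done p) (c.face p) false) q f = true := by
    intro q f hOk hd
    unfold Ok at hOk ⊢
    dsimp only
    by_cases hq : q = p
    · subst hq
      rcases hOk with ⟨hf, hl⟩ | ⟨hf, hl⟩
      · rw [hpc] at hl; simp at hl
      · refine ⟨Or.inr ⟨hf, Or.inl ?_⟩, ?_⟩
        · rw [Function.update_self]; rfl
        · rw [Function.update_self, Function.update_of_ne (fun e => hf e.symm)]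
          exact hd
    · constructor
      · rw [Function.update_of_ne hq]; exact hOk
      · rw [Function.update_of_ne hq]; exact hd
  refine ⟨h.nodup, ?_, ?_, h.chain, h.xlast, ?_, ?_, ?_, ?_, ?_⟩
  · intro r
    dsimp only
    by_cases hr : r = p
    · subst hr; rw [Function.update_self]; simp [actB, hpL]
    · rw [Function.update_of_ne hr]; exact h.mem r
  · intro r hr
    dsimp only
    rw [Function.update_of_ne (hne r (List.mem_of_mem_tail hr))]
    exact h.tailW r hr
  · intro hL
    rcases h.xempty hL with hX | ⟨q, f, hX, hd, hOk⟩
    · exact Or.inl hX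
    · obtain ⟨hOk', hd'⟩ := hOk' q f hOk hd
      exact Or.inr ⟨q, f, hX, hd', hOk'⟩
  · intro r t hLr
    have hrp : r ≠ p := hne r (hLr ▸ List.mem_cons_self)
    rcases h.headOk r t hLr with hnone | ⟨q, f, hprev, hd, hcase⟩
    · exact Or.inl hnone
    · rcases hcase with ⟨hqr, hf⟩ | ⟨hqr, hOk⟩
      · refine Or.inr ⟨q, f, hprev, ?_, Or.inl ⟨hqr, hf⟩⟩
        dsimp only
        have hqp : q ≠ p := by rw [hqr]; exact hrp
        rw [Function.update_of_ne hqp]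
        exact hd
      · obtain ⟨hOk', hd'⟩ := hOk' q f hOk hd
        exact Or.inr ⟨q, f, hprev, hd', Or.inr ⟨hqr, hOk'⟩⟩
  · intro r h1 h2 h3
    dsimp only at h1 h2 h3 ⊢
    by_cases hr : r = p
    · subst hr
      rw [Function.update_self, Function.update_self]
    · rw [Function.update_of_ne hr] at h1 h2 h3
      rw [Function.update_of_ne hr]
      exact h.doneF r h1 h2 h3
  · intro r hr
    dsimp only at hr ⊢
    by_cases hrp : r = p
    · subst hrp; rw [Function.update_self] at hr; exact absurd hr (by simp)
    · rw [Function.update_of_ne hrp] at hr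
      rw [Function.update_of_ne hrp]
      exact h.doneE r hr
  · intro r s f hw hprev hface hlive
    dsimp only at hw hprev hface hlive ⊢
    by_cases hr : r = p
    · subst hr; rw [Function.update_self] at hw; simp [waitB] at hw
    · by_cases hs : s = p
      · subst hs; rw [Function.update_self] at hlive; simp [liveB, actB] at hlive
      · rw [Function.update_of_ne hr] at hw
        rw [Function.update_of_ne hs] at hlive
        exact h.lockI r s f hw hprev hface hlive

lemma inv_lockWrite {c : Conf n} {L : List (Fin n)} (h : InvL c L)
    {p q0 : Fin n} {f0 : Bool}
    (hpc : c.pc p = Loc.lockPred) (hprev : c.prev p = some (q0, f0)) :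
    InvL { c with pc := Function.update c.pc p Loc.setSucc,
                  lock := Function.update c.lock p
                    (Function.update (c.lock p) q0 true) } L := by
  have hOk' : ∀ q f, Ok c q f →
      Ok { c with pc := Function.update c.pc p Loc.setSucc,
                  lock := Function.update c.lock p
                    (Function.update (c.lock p) q0 true) } q f := by
    intro q f hOk
    unfold Ok at hOk ⊢
    dsimp only
    by_cases hq : q = p
    · subst hq
      rw [Function.update_self]
      rcases hOk with ⟨hf, hl⟩ | ⟨hf, hl⟩
      · rw [hpc] at hl; simp at hl
      · exact Or.inr ⟨hf, Or.inr rfl⟩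
    · rw [Function.update_of_ne hq]; exact hOk
  refine ⟨h.nodup, ?_, ?_, h.chain, h.xlast, ?_, ?_, ?_, ?_, ?_⟩
  · intro r
    dsimp only
    by_cases hr : r = p
    · subst hr; rw [Function.update_self]
      have := h.mem r; rw [hpc] at this; simpa [actB] using this
    · rw [Function.update_of_ne hr]; exact h.mem r
  · intro r hr
    dsimp only
    by_cases hrp : r = p
    · subst hrp; rw [Function.update_self]; rfl
    · rw [Function.update_of_ne hrp]; exact h.tailW r hr
  · intro hL
    rcases h.xempty hL with hX | ⟨q, f, hX, hd, hOk⟩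
    · exact Or.inl hX
    · exact Or.inr ⟨q, f, hX, hd, hOk' q f hOk⟩
  · intro r t hLr
    rcases h.headOk r t hLr with hnone | ⟨q, f, hprev', hd, hcase⟩
    · exact Or.inl hnone
    · rcases hcase with ⟨hqr, hf⟩ | ⟨hqr, hOk⟩
      · exact Or.inr ⟨q, f, hprev', hd, Or.inl ⟨hqr, hf⟩⟩
      · exact Or.inr ⟨q, f, hprev', hd, Or.inr ⟨hqr, hOk' q f hOk⟩⟩
  · intro r h1 h2 h3
    dsimp only at h1 h2 h3 ⊢
    by_cases hr : r = p
    · subst hr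
      exact h.doneF r (by rw [hpc]; simp) (by rw [hpc]; simp) (by rw [hpc]; simp)
    · rw [Function.update_of_ne hr] at h1 h2 h3
      exact h.doneF r h1 h2 h3
  · intro r hr
    dsimp only at hr ⊢
    by_cases hrp : r = p
    · subst hrp; rw [Function.update_self] at hr; exact absurd hr (by simp)
    · rw [Function.update_of_ne hrp] at hr
      exact h.doneE r hr
  · intro r s f hw hprev' hface hlive
    dsimp only at hw hprev' hface hlive ⊢
    by_cases hr : r = p
    · subst hr
      rw [hprev] at hprev'
      simp only [Option.some.injEq, Prod.mk.injEq] at hprev'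
      rw [Function.update_self, ← hprev'.1, Function.update_self]
    · by_cases hs : s = p
      · subst hs
        rw [Function.update_self] at hlive
        rw [Function.update_of_ne hr] at hw
        rw [Function.update_of_ne hr]
        refine h.lockI r s f hw hprev' hface ?_
        rw [hpc]
        simpa [liveB, actB] using hlive
      · rw [Function.update_of_ne hr] at hw
        rw [Function.update_of_ne hs] at hlive
        rw [Function.update_of_ne hr]
        exact h.lockI r s f hw hprev' hface hlive

end MutexProof4
section MutexProof5
variable {n : ℕ}

/-- the head of the queue may enter the critical section. -/
lemma inv_toCrit {c : Conf n} {L : List (Fin n)} (h : InvL c L) {p : Fin n}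
    (hhead : L = p :: L.tail)
    (hpcF : c.pc p = Loc.checkDone ∨ c.pc p = Loc.spin) :
    InvL { c with pc := Function.update c.pc p Loc.crit } L := by
  have hact : actB (c.pc p) = true := by rcases hpcF with e | e <;> rw [e] <;> rfl
  have hpt : p ∉ L.tail := by
    have := h.nodup; rw [hhead] at this
    exact (List.nodup_cons.mp this).1
  have hOk' : ∀ q f, q ≠ p → Ok c q f →
      Ok { c with pc := Function.update c.pc p Loc.crit } q f := by
    intro q f hq hOk
    unfold Ok at hOk ⊢
    dsimp only
    rw [Function.update_of_ne hq]
    exact hOk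
  refine ⟨h.nodup, ?_, ?_, h.chain, h.xlast, ?_, ?_, ?_, ?_, ?_⟩
  · intro r
    dsimp only
    by_cases hr : r = p
    · subst hr; rw [Function.update_self]; simp [actB, (h.mem r).mpr hact]
    · rw [Function.update_of_ne hr]; exact h.mem r
  · intro r hr
    dsimp only
    have hrp : r ≠ p := fun e => hpt (e ▸ hr)
    rw [Function.update_of_ne hrp]
    exact h.tailW r hr
  · intro hL
    rw [hL] at hhead; exact absurd hhead (by simp)
  · intro r t hLr
    have hrp : r = p := by
      rw [hhead] at hLr
      exact (List.cons.injEq _ _ _ _ ▸ hLr : _ ∧ _).1.symm ▸ rfl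
    subst hrp
    rcases h.headOk r t hLr with hnone | ⟨q, f, hprev, hd, hcase⟩
    · exact Or.inl hnone
    · rcases hcase with ⟨hqr, hf⟩ | ⟨hqr, hOk⟩
      · exact Or.inr ⟨q, f, hprev, hd, Or.inl ⟨hqr, hf⟩⟩
      · exact Or.inr ⟨q, f, hprev, hd, Or.inr ⟨hqr, hOk' q f hqr hOk⟩⟩
  · intro r h1 h2 h3
    dsimp only at h1 h2 h3 ⊢
    by_cases hr : r = p
    · subst hr
      refine h.doneF r ?_ ?_ ?_ <;> rcases hpcF with e | e <;> rw [e] <;> simp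
    · rw [Function.update_of_ne hr] at h1 h2 h3
      exact h.doneF r h1 h2 h3
  · intro r hr
    dsimp only at hr ⊢
    by_cases hrp : r = p
    · subst hrp; rw [Function.update_self] at hr; exact absurd hr (by simp)
    · rw [Function.update_of_ne hrp] at hr
      exact h.doneE r hr
  · intro r s f hw hprev hface hlive
    dsimp only at hw hprev hface hlive ⊢
    by_cases hr : r = p
    · subst hr; rw [Function.update_self] at hw; simp [waitB] at hw
    · rw [Function.update_of_ne hr] at hw
      by_cases hs : s = p
      · subst hs
        rw [Function.update_self] at hlive
        refine h.lockI r s f hw hprev hface ?_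
        rcases hpcF with e | e <;> rw [e] <;> rfl
      · rw [Function.update_of_ne hs] at hlive
        exact h.lockI r s f hw hprev hface hlive

/-- `doneCheckTrue` can only be executed by the head of the queue. -/
lemma head_doneCheckTrue {c : Conf n} {L : List (Fin n)} (h : InvL c L)
    {p q0 : Fin n} {f0 : Bool} (hpc : c.pc p = Loc.checkDone)
    (hprev : c.prev p = some (q0, f0)) (hd : c.done q0 f0 = true) :
    L = p :: L.tail := by
  have hact : actB (c.pc p) = true := by rw [hpc]; rfl
  refine head_of_mem_not_tail ((h.mem p).mpr hact) (fun ht => ?_)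
  obtain ⟨s, hs, hR⟩ := tail_prev h ht
  rw [hprev] at hR
  simp only [Option.some.injEq, Prod.mk.injEq] at hR
  have hsact : actB (c.pc s) = true := (h.mem s).mp hs
  have := h.doneF s (actB_ne_idle hsact) (actB_ne_entry1 hsact) (actB_ne_exit2 hsact)
  rw [hR.1, hR.2] at hd
  rw [hd] at this
  exact absurd this (by simp)

/-- `spinUnlocked` can only be executed by the head of the queue. -/
lemma head_spinUnlocked {c : Conf n} {L : List (Fin n)} (h : InvL c L)
    {p q0 : Fin n} {f0 : Bool} (hpc : c.pc p = Loc.spin)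
    (hprev : c.prev p = some (q0, f0)) (hl : c.lock p q0 = false) :
    L = p :: L.tail := by
  have hact : actB (c.pc p) = true := by rw [hpc]; rfl
  refine head_of_mem_not_tail ((h.mem p).mpr hact) (fun ht => ?_)
  obtain ⟨s, hs, hR⟩ := tail_prev h ht
  rw [hprev] at hR
  simp only [Option.some.injEq, Prod.mk.injEq] at hR
  have hsact : actB (c.pc s) = true := (h.mem s).mp hs
  have := h.lockI p s (c.face s) (by rw [hpc]; rfl) (by rw [hprev, hR.1, hR.2])
    rfl (actB_live hsact)
  rw [hR.1] at hl
  rw [hl] at this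
  exact absurd this (by simp)

end MutexProof5
section MutexProof6
variable {n : ℕ}

lemma inv_exitDone {c : Conf n} {L : List (Fin n)} (h : InvL c L) {p : Fin n}
    (hpc : c.pc p = Loc.exit1) :
    InvL { c with pc := Function.update c.pc p Loc.exit2,
                  done := Function.update c.done p
                    (Function.update (c.done p) (c.face p) true) } L.tail := by
  have hact : actB (c.pc p) = true := by rw [hpc]; rfl
  have hhead : L = p :: L.tail := head_of_act_not_wt h hact (by rw [hpc]; simp [wtB])
  have hpt : p ∉ L.tail := by
    have := h.nodup; rw [hhead] at this
    exact (List.nodup_cons.mp this).1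
  have hne : ∀ r ∈ L.tail, r ≠ p := fun r hr e => hpt (e ▸ hr)
  have hdone' : ∀ q f, q ≠ p → Function.update c.done p
      (Function.update (c.done p) (c.face p) true) q f = c.done q f := by
    intro q f hq; rw [Function.update_of_ne hq]
  refine ⟨h.nodup.tail, ?_, ?_, ?_, ?_, ?_, ?_, ?_, ?_, ?_⟩
  · intro r
    dsimp only
    by_cases hr : r = p
    · subst hr
      rw [Function.update_self]
      simp [actB, hpt]
    · rw [Function.update_of_ne hr]
      constructor
      · intro hrt; exact (h.mem r).mp (List.mem_of_mem_tail hrt)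
      · intro hrc
        have : r ∈ L := (h.mem r).mpr hrc
        rw [hhead] at this
        rcases List.mem_cons.mp this with e | e
        · exact absurd e hr
        · exact e
  · intro r hr
    dsimp only
    have hrt : r ∈ L.tail := List.mem_of_mem_tail hr
    rw [Function.update_of_ne (hne r hrt)]
    exact h.tailW r (by rw [hhead]; exact List.mem_of_mem_tail hr)
  · refine chain'_mono_mem ?_ h.chain.tail
    intro a _ b _ hR
    exact hR
  · intro r hr
    have hrt : r ∈ L.tail := mem_of_mem_getLast?' hr
    show c.X = some (r, c.face r)
    refine h.xlast r ?_
    rw [hhead]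
    cases e : L.tail with
    | nil => rw [e] at hr; exact absurd hr (by simp)
    | cons a t =>
      rw [e] at hr
      rw [List.getLast?_cons_cons]
      exact hr
  · intro hL
    have hLp : L = [p] := by rw [hhead, hL]
    have hX : c.X = some (p, c.face p) := h.xlast p (by rw [hLp]; rfl)
    refine Or.inr ⟨p, c.face p, hX, ?_, ?_⟩
    · dsimp only
      rw [Function.update_self, Function.update_self]
    · unfold Ok
      dsimp only
      rw [Function.update_self]
      exact Or.inl ⟨rfl, Or.inr rfl⟩
  · intro r t hLr
    have hrp : r ≠ p := hne r (hLr ▸ List.mem_cons_self)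
    have hchain : c.prev r = some (p, c.face p) := by
      have := h.chain
      rw [hhead, hLr, List.Chain', List.isChain_cons_cons] at this
      exact this.1
    refine Or.inr ⟨p, c.face p, hchain, ?_, Or.inr ⟨fun e => hrp e.symm, ?_⟩⟩
    · dsimp only
      rw [Function.update_self, Function.update_self]
    · unfold Ok
      dsimp only
      rw [Function.update_self]
      exact Or.inl ⟨rfl, Or.inr rfl⟩
  · intro r h1 h2 h3
    dsimp only at h1 h2 h3 ⊢
    by_cases hr : r = p
    · subst hr; rw [Function.update_self] at h3; exact absurd rfl h3
    · rw [Function.update_of_ne hr] at h1 h2 h3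
      rw [Function.update_of_ne hr]
      exact h.doneF r h1 h2 h3
  · intro r hr
    dsimp only at hr ⊢
    by_cases hrp : r = p
    · subst hrp
      rw [Function.update_self, Function.update_self]
    · rw [Function.update_of_ne hrp] at hr
      rw [Function.update_of_ne hrp]
      exact h.doneE r hr
  · intro r s f hw hprev hface hlive
    dsimp only at hw hprev hface hlive ⊢
    by_cases hr : r = p
    · subst hr; rw [Function.update_self] at hw; simp [waitB] at hw
    · rw [Function.update_of_ne hr] at hw
      by_cases hs : s = p
      · subst hs
        rw [Function.update_self] at hlive
        exact h.lockI r s f hw hprev hface (by rw [hpc]; rfl)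
      · rw [Function.update_of_ne hs] at hlive
        exact h.lockI r s f hw hprev hface hlive

lemma inv_exitUnlock {c : Conf n} {L : List (Fin n)} (h : InvL c L) {p : Fin n}
    {lk : Fin n → Fin n → Bool}
    (hpc : c.pc p = Loc.exit2)
    (hlk : ∀ r s, r ≠ p → s ≠ p → lk r s = c.lock r s) :
    InvL { c with pc := Function.update c.pc p Loc.idle, lock := lk } L := by
  have hpL : p ∉ L := fun hm => by
    have := (h.mem p).mp hm; rw [hpc] at this; simp [actB] at this
  have hne : ∀ r ∈ L, r ≠ p := fun r hr e => hpL (e ▸ hr)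
  have hOk' : ∀ q f, Ok c q f →
      Ok { c with pc := Function.update c.pc p Loc.idle, lock := lk } q f := by
    intro q f hOk
    unfold Ok at hOk ⊢
    dsimp only
    by_cases hq : q = p
    · subst hq
      rw [Function.update_self]
      rcases hOk with ⟨hf, _⟩ | ⟨_, hl⟩
      · exact Or.inl ⟨hf, Or.inl rfl⟩
      · rw [hpc] at hl; simp [entB, wtB] at hl
    · rw [Function.update_of_ne hq]; exact hOk
  refine ⟨h.nodup, ?_, ?_, h.chain, h.xlast, ?_, ?_, ?_, ?_, ?_⟩
  · intro r
    dsimp only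
    by_cases hr : r = p
    · subst hr; rw [Function.update_self]; simp [actB, hpL]
    · rw [Function.update_of_ne hr]; exact h.mem r
  · intro r hr
    dsimp only
    rw [Function.update_of_ne (hne r (List.mem_of_mem_tail hr))]
    exact h.tailW r hr
  · intro hL
    rcases h.xempty hL with hX | ⟨q, f, hX, hd, hOk⟩
    · exact Or.inl hX
    · exact Or.inr ⟨q, f, hX, hd, hOk' q f hOk⟩
  · intro r t hLr
    rcases h.headOk r t hLr with hnone | ⟨q, f, hprev, hd, hcase⟩
    · exact Or.inl hnone
    · rcases hcase with ⟨hqr, hf⟩ | ⟨hqr, hOk⟩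
      · exact Or.inr ⟨q, f, hprev, hd, Or.inl ⟨hqr, hf⟩⟩
      · exact Or.inr ⟨q, f, hprev, hd, Or.inr ⟨hqr, hOk' q f hOk⟩⟩
  · intro r h1 h2 h3
    dsimp only at h1 h2 h3 ⊢
    by_cases hr : r = p
    · subst hr; rw [Function.update_self] at h1; exact absurd rfl h1
    · rw [Function.update_of_ne hr] at h1 h2 h3
      exact h.doneF r h1 h2 h3
  · intro r hr
    dsimp only at hr ⊢
    by_cases hrp : r = p
    · subst hrp; rw [Function.update_self] at hr; exact absurd hr (by simp)
    · rw [Function.update_of_ne hrp] at hr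
      exact h.doneE r hr
  · intro r s f hw hprev hface hlive
    dsimp only at hw hprev hface hlive ⊢
    by_cases hr : r = p
    · subst hr; rw [Function.update_self] at hw; simp [waitB] at hw
    · rw [Function.update_of_ne hr] at hw
      by_cases hs : s = p
      · subst hs; rw [Function.update_self] at hlive; simp [liveB, actB] at hlive
      · rw [Function.update_of_ne hs] at hlive
        rw [hlk r s hr hs]
        exact h.lockI r s f hw hprev hface hlive

end MutexProof6
section MutexProof7
variable {n : ℕ}

/-- committed transaction when `X = ⊥`: the process enters the CS directly. -/
lemma inv_transNone {c : Conf n} {L : List (Fin n)} (h : InvL c L) {p : Fin n}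
    (hpc : c.pc p = Loc.trans) (hX : c.X = none) :
    InvL { c with pc := Function.update c.pc p Loc.crit,
                  prev := Function.update c.prev p c.X,
                  X := some (p, c.face p) } [p] := by
  have hL : L = [] := by
    cases e : L with
    | nil => rfl
    | cons a t =>
      have := h.xlast (L.getLast (by rw [e]; simp))
        (by rw [List.getLast?_eq_getLast_of_ne_nil (by rw [e]; simp)]; rfl)
      rw [hX] at this; exact absurd this (by simp)
  have hnoact : ∀ r, actB (c.pc r) = true → False := by
    intro r hr
    have := (h.mem r).mpr hr
    rw [hL] at this; simp at this
  refine ⟨List.nodup_singleton p, ?_, ?_, ?_, ?_, ?_, ?_, ?_, ?_, ?_⟩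
  · intro r
    dsimp only
    by_cases hr : r = p
    · subst hr; rw [Function.update_self]; simp [actB]
    · rw [Function.update_of_ne hr]
      simp only [List.mem_singleton, hr, false_iff]
      intro hc; exact hnoact r hc
  · intro r hr; simp at hr
  · exact List.isChain_singleton _
  · intro r hr
    simp only [List.getLast?_singleton, Option.mem_some_iff] at hr
    subst hr; rfl
  · intro hL'; simp at hL'
  · intro r t hLr
    simp only [List.cons.injEq] at hLr
    rw [← hLr.1]
    dsimp only
    rw [Function.update_self, hX]
    exact Or.inl rfl
  · intro r h1 h2 h3
    dsimp only at h1 h2 h3 ⊢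
    by_cases hr : r = p
    · subst hr
      exact h.doneF r (by rw [hpc]; simp) (by rw [hpc]; simp) (by rw [hpc]; simp)
    · rw [Function.update_of_ne hr] at h1 h2 h3
      exact h.doneF r h1 h2 h3
  · intro r hr
    dsimp only at hr ⊢
    by_cases hrp : r = p
    · subst hrp; rw [Function.update_self] at hr; exact absurd hr (by simp)
    · rw [Function.update_of_ne hrp] at hr
      exact h.doneE r hr
  · intro r s f hw hprev hface hlive
    dsimp only at hw hprev hface hlive ⊢
    by_cases hr : r = p
    · subst hr; rw [Function.update_self] at hw; simp [waitB] at hw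
    · rw [Function.update_of_ne hr] at hw
      exact absurd (waitB_act hw) (fun e => hnoact r e)

/-- committed transaction when `X ≠ ⊥`: the process is appended to the queue. -/
lemma inv_transSome {c : Conf n} {L : List (Fin n)} (h : InvL c L) {p : Fin n}
    (hpc : c.pc p = Loc.trans) (hX : c.X ≠ none) :
    InvL { c with pc := Function.update c.pc p Loc.lockPred,
                  prev := Function.update c.prev p c.X,
                  X := some (p, c.face p) } (L ++ [p]) := by
  have hpL : p ∉ L := fun hm => by
    have := (h.mem p).mp hm; rw [hpc] at this; simp [actB] at this
  have hne : ∀ r ∈ L, r ≠ p := fun r hr e => hpL (e ▸ hr)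
  have hOk' : ∀ q f, q ≠ p → Ok c q f →
      Ok { c with pc := Function.update c.pc p Loc.lockPred,
                  prev := Function.update c.prev p c.X,
                  X := some (p, c.face p) } q f := by
    intro q f hq hOk
    unfold Ok at hOk ⊢
    dsimp only
    rw [Function.update_of_ne hq]
    exact hOk
  have hOkp : ∀ f, Ok c p f → c.face p ≠ f := by
    intro f hOk
    rcases hOk with ⟨_, hl⟩ | ⟨hf, _⟩
    · rw [hpc] at hl; simp at hl
    · exact hf
  refine ⟨?_, ?_, ?_, ?_, ?_, ?_, ?_, ?_, ?_, ?_⟩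
  · rw [List.nodup_append]
    exact ⟨h.nodup, List.nodup_singleton p, by simpa using hne⟩
  · intro r
    dsimp only
    by_cases hr : r = p
    · subst hr; rw [Function.update_self]; simp [actB]
    · rw [Function.update_of_ne hr]
      simp only [List.mem_append, List.mem_singleton, hr, or_false]
      exact h.mem r
  · intro r hr
    dsimp only
    by_cases hrp : r = p
    · subst hrp; rw [Function.update_self]; rfl
    · rw [Function.update_of_ne hrp]
      refine h.tailW r ?_
      cases e : L with
      | nil => rw [e] at hr; simp at hr
      | cons a t =>
        rw [e] at hr
        simp only [List.cons_append, List.tail_cons, List.mem_append,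
          List.mem_singleton] at hr
        rcases hr with hr | hr
        · simpa using hr
        · exact absurd hr hrp
  · rw [List.Chain', List.isChain_append]
    refine ⟨?_, List.isChain_singleton p, ?_⟩
    · refine chain'_mono_mem ?_ h.chain
      intro a _ b hb hR
      dsimp only
      rw [Function.update_of_ne (hne b hb)]
      exact hR
    · intro x hx y hy
      simp only [List.head?_cons, Option.mem_some_iff] at hy
      subst hy
      dsimp only
      rw [Function.update_self]
      exact h.xlast x hx
  · intro r hr
    rw [List.getLast?_concat] at hr
    simp only [Option.mem_some_iff] at hr
    subst hr; rfl
  · intro hL'; simp at hL'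
  · intro r t hLr
    cases e : L with
    | nil =>
      rw [e] at hLr
      simp only [List.nil_append, List.cons.injEq] at hLr
      rw [← hLr.1]
      rcases h.xempty e with hX' | ⟨q, f, hX', hd, hOk⟩
      · exact absurd hX' hX
      · refine Or.inr ⟨q, f, ?_, hd, ?_⟩
        · dsimp only
          rw [Function.update_self, hX']
        · by_cases hq : q = p
          · subst hq
            exact Or.inl ⟨rfl, hOkp f hOk⟩
          · exact Or.inr ⟨hq, hOk' q f hq hOk⟩
    | cons h0 t0 =>
      rw [e] at hLr
      simp only [List.cons_append, List.cons.injEq] at hLr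
      have hr0 : r = h0 := hLr.1.symm
      subst hr0
      have hrp : r ≠ p := hne r (by rw [e]; exact List.mem_cons_self)
      rcases h.headOk r t0 e with hnone | ⟨q, f, hprev, hd, hcase⟩
      · refine Or.inl ?_
        dsimp only
        rw [Function.update_of_ne hrp]
        exact hnone
      · refine Or.inr ⟨q, f, ?_, hd, ?_⟩
        · dsimp only
          rw [Function.update_of_ne hrp]
          exact hprev
        · rcases hcase with ⟨hqr, hf⟩ | ⟨hqr, hOk⟩
          · exact Or.inl ⟨hqr, hf⟩
          · by_cases hq : q = p
            · subst hq
              refine Or.inr ⟨hqr, ?_⟩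
              unfold Ok
              dsimp only
              rw [Function.update_self]
              exact Or.inr ⟨hOkp f hOk, Or.inr rfl⟩
            · exact Or.inr ⟨hqr, hOk' q f hq hOk⟩
  · intro r h1 h2 h3
    dsimp only at h1 h2 h3 ⊢
    by_cases hr : r = p
    · subst hr
      exact h.doneF r (by rw [hpc]; simp) (by rw [hpc]; simp) (by rw [hpc]; simp)
    · rw [Function.update_of_ne hr] at h1 h2 h3
      exact h.doneF r h1 h2 h3
  · intro r hr
    dsimp only at hr ⊢
    by_cases hrp : r = p
    · subst hrp; rw [Function.update_self] at hr; exact absurd hr (by simp)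
    · rw [Function.update_of_ne hrp] at hr
      exact h.doneE r hr
  · intro r s f hw hprev hface hlive
    dsimp only at hw hprev hface hlive ⊢
    by_cases hr : r = p
    · subst hr; rw [Function.update_self] at hw; simp [waitB] at hw
    · rw [Function.update_of_ne hr] at hw
      rw [Function.update_of_ne hr] at hprev
      by_cases hs : s = p
      · subst hs
        exfalso
        have hrL : r ∈ L := (h.mem r).mpr (waitB_act hw)
        by_cases hrt : r ∈ L.tail
        · obtain ⟨s', hs', hR⟩ := tail_prev h hrt
          rw [hprev] at hR
          simp only [Option.some.injEq, Prod.mk.injEq] at hR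
          exact hpL (hR.1 ▸ hs')
        · have hhead := head_of_mem_not_tail hrL hrt
          rcases h.headOk r L.tail hhead with hnone | ⟨q', f', hp', _, hcase⟩
          · rw [hnone] at hprev; exact absurd hprev (by simp)
          · rw [hprev] at hp'
            simp only [Option.some.injEq, Prod.mk.injEq] at hp'
            rcases hcase with ⟨hq', _⟩ | ⟨_, hOk⟩
            · exact hr (hq' ▸ hp'.1.symm ▸ rfl)
            · rw [← hp'.1] at hOk
              rcases hOk with ⟨_, hl⟩ | ⟨hf', _⟩
              · rw [hpc] at hl; simp at hl
              · rw [← hp'.2] at hf'; exact hf' hface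
      · rw [Function.update_of_ne hs] at hlive
        exact h.lockI r s f hw hprev hface hlive

end MutexProof7
section MutexProof8
variable {n : ℕ}

lemma inv_init : InvL (initConf n) [] := by
  refine ⟨List.nodup_nil, ?_, ?_, ?_, ?_, ?_, ?_, ?_, ?_, ?_⟩
  · intro p; simp [initConf, actB]
  · intro p hp; simp at hp
  · exact List.isChain_nil
  · intro p hp; simp [List.getLast?] at hp
  · intro _; exact Or.inl rfl
  · intro p l hl; simp at hl
  · intro q _ _ _; rfl
  · intro q hq; simp [initConf] at hq
  · intro p q f hw; simp [initConf, waitB] at hw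

lemma inv_step {c c' : Conf n} {p : Fin n} {L : List (Fin n)}
    (hstep : MStep n p c c') (h : InvL c L) : ∃ L', InvL c' L' := by
  cases hstep with
  | invokeEnter c p hpc => exact ⟨L, inv_invokeEnter h hpc⟩
  | idleSkip c p hpc => exact ⟨L, h⟩
  | doneWrite c p hpc => exact ⟨L, inv_doneWrite h hpc⟩
  | succInit c p hpc =>
    exact ⟨L, inv_pc_update h (by rw [hpc]; rfl) (by rw [hpc]; rfl) (by rw [hpc]; rfl)
      (by rw [hpc]; rfl) (by rw [hpc]; simp) (by rw [hpc]; simp) (by rw [hpc]; simp)⟩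
  | transAbort c p hpc => exact ⟨L, h⟩
  | transSuccess c p hpc =>
    by_cases hX : c.X = none
    · rw [if_pos hX]
      exact ⟨[p], inv_transNone h hpc hX⟩
    · rw [if_neg hX]
      exact ⟨L ++ [p], inv_transSome h hpc hX⟩
  | lockWrite c p q f hpc hprev => exact ⟨L, inv_lockWrite h hpc hprev⟩
  | succWrite c p q f hpc hprev =>
    exact ⟨L, inv_pc_update h (by rw [hpc]; rfl) (by rw [hpc]; rfl) (by rw [hpc]; rfl)
      (by rw [hpc]; rfl) (by rw [hpc]; simp) (by rw [hpc]; simp) (by rw [hpc]; simp)⟩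
  | doneCheckTrue c p q f hpc hprev hd =>
    exact ⟨L, inv_toCrit h (head_doneCheckTrue h hpc hprev hd) (Or.inl hpc)⟩
  | doneCheckFalse c p q f hpc hprev hd =>
    exact ⟨L, inv_pc_update h (by rw [hpc]; rfl) (by rw [hpc]; rfl) (by rw [hpc]; rfl)
      (by rw [hpc]; rfl) (by rw [hpc]; simp) (by rw [hpc]; simp) (by rw [hpc]; simp)⟩
  | spinLocked c p q f hpc hprev hl => exact ⟨L, h⟩
  | spinUnlocked c p q f hpc hprev hl =>
    exact ⟨L, inv_toCrit h (head_spinUnlocked h hpc hprev hl) (Or.inr hpc)⟩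
  | critSkip c p hpc => exact ⟨L, h⟩
  | invokeExit c p hpc =>
    exact ⟨L, inv_pc_update h (by rw [hpc]; rfl) (by rw [hpc]; rfl) (by rw [hpc]; rfl)
      (by rw [hpc]; rfl) (by rw [hpc]; simp) (by rw [hpc]; simp) (by rw [hpc]; simp)⟩
  | exitDone c p hpc => exact ⟨L.tail, inv_exitDone h hpc⟩
  | exitUnlockSome c p q hpc hsucc =>
    refine ⟨L, inv_exitUnlock h hpc ?_⟩
    intro r s hr hs
    by_cases hq : r = q
    · subst hq
      rw [Function.update_self, Function.update_of_ne hs]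
    · rw [Function.update_of_ne hq]
  | exitUnlockNone c p hpc hsucc =>
    exact ⟨L, inv_exitUnlock h hpc (fun r s _ _ => rfl)⟩

lemma inv_reachable {c : Conf n} (h : Reachable n c) : ∃ L, InvL c L := by
  induction h with
  | refl => exact ⟨[], inv_init⟩
  | tail _ hstep ih =>
    obtain ⟨L, hL⟩ := ih
    obtain ⟨p, hp⟩ := hstep
    exact inv_step hp hL

end MutexProof8
/-!
STATEMENT 7 (Lemma 3).
The mutual exclusion implementation `L(M)` (Algorithm 1), built from any
strictly serializable strongly progressive TM implementation `M`, satisfies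
the mutual-exclusion property: after any execution of `L(M)`, at most one
process is in the critical section.
-/
theorem LM_mutual_exclusion (n : ℕ) (c : Conf n) (hreach : Reachable n c) :
    ∀ p q : Fin n, inCS c p → inCS c q → p = q := by
  intro p q hp hq
  obtain ⟨L, h⟩ := inv_reachable hreach
  have hhp : L = p :: L.tail :=
    head_of_act_not_wt h (by rw [hp]; rfl) (by rw [hp]; simp [wtB])
  have hhq : L = q :: L.tail :=
    head_of_act_not_wt h (by rw [hq]; rfl) (by rw [hq]; simp [wtB])
  rw [hhp] at hhq
  exact (List.cons.injEq _ _ _ _ ▸ hhq : _ ∧ _).1
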